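/- Let (G,·) be a group with identity e and let ⊙ be a binary operation on G. Then (G,·,e,⊙) is an identical group-e-semigroup (i.e. ⊙ is associative and e⊙(x·y) = e⊙(x⊙y) = x⊙y = (x·y)⊙e for all x,y ∈ G) if and only if there exists a function f : G → G that is associative (f(f(x·y)·z) = f(x·f(y·z)) for all x,y,z) and idempotent (f(f(x)) = f(x) for all x) such that x⊙y = f(x·y) for all x,y ∈ G; moreover such an f is unique, namely f(x) = e⊙x for all x ∈ G, and it is a strong decomposer of (G,·). -/
import Mathlib


/-- Let `(G, ·)` be a group with identity `e = 1` and `⊙` a binary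
operation. Then `(G, ·, e, ⊙)` is an identical group-`e`-semigroup (i.e. `⊙` is
associative and `e⊙(x·y) = e⊙(x⊙y) = x⊙y = (x·y)⊙e`) iff there exists an associative
and idempotent function `f : G → G` with `x ⊙ y = f(x·y)`; moreover such an `f` is
unique, namely `f x = e ⊙ x`, and it is a strong decomposer of `(G, ·)`. -/
theorem stmt_18 {G : Type*} [Group G] (op : G → G → G) :
    (((∀ x y z : G, op (op x y) z = op x (op y z)) ∧
      (∀ x y : G, op 1 (x * y) = op 1 (op x y)) ∧
      (∀ x y : G, op 1 (op x y) = op x y) ∧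
      (∀ x y : G, op x y = op (x * y) 1)) ↔
      (∃ f : G → G, (∀ x y z : G, f (f (x * y) * z) = f (x * f (y * z))) ∧
        (∀ x : G, f (f x) = f x) ∧ ∀ x y : G, op x y = f (x * y))) ∧
    (((∀ x y z : G, op (op x y) z = op x (op y z)) ∧
      (∀ x y : G, op 1 (x * y) = op 1 (op x y)) ∧
      (∀ x y : G, op 1 (op x y) = op x y) ∧
      (∀ x y : G, op x y = op (x * y) 1)) →
      ∀ f : G → G,
        ((∀ x y z : G, f (f (x * y) * z) = f (x * f (y * z))) ∧
          (∀ x : G, f (f x) = f x) ∧ (∀ x y : G, op x y = f (x * y))) →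
        (∀ x : G, f x = op 1 x) ∧
        (∀ x y : G, f ((x * (f x)⁻¹) * y) = f y ∧ f (x * ((f y)⁻¹ * y)) = f x)) := by
  constructor
  · constructor
    · rintro ⟨h1, h2, h3, h4⟩
      refine ⟨fun x => op 1 x, ?_, ?_, ?_⟩
      · intro x y z
        have e1 : op 1 (x * y) = op x y := (h2 x y).trans (h3 x y)
        have e2 : op 1 (y * z) = op y z := (h2 y z).trans (h3 y z)
        simp only [e1, e2]
        calc op 1 (op x y * z) = op 1 (op (op x y) z) := h2 _ _
          _ = op (op x y) z := h3 _ _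
          _ = op x (op y z) := h1 x y z
          _ = op 1 (op x (op y z)) := (h3 _ _).symm
          _ = op 1 (x * op y z) := (h2 _ _).symm
      · intro x
        exact h3 1 x
      · intro x y
        exact ((h2 x y).trans (h3 x y)).symm
    · rintro ⟨f, hassoc, hid, hop⟩
      refine ⟨?_, ?_, ?_, ?_⟩
      · intro x y z
        simp only [hop]
        exact hassoc x y z
      · intro x y
        simp only [hop, one_mul, hid]
      · intro x y
        simp only [hop, one_mul, hid]
      · intro x y
        simp only [hop, mul_one]
  · rintro - f ⟨hassoc, hid, hop⟩
    have star : ∀ b c : G, f (f b * c) = f (b * c) := by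
      intro b c
      have := hassoc 1 b c
      rw [one_mul, one_mul, hid] at this
      exact this
    have dstar : ∀ a b : G, f (a * f b) = f (a * b) := by
      intro a b
      have := hassoc a b 1
      rw [mul_one, mul_one, hid] at this
      exact this.symm
    constructor
    · intro x
      rw [hop, one_mul]
    · intro x y
      constructor
      · have k1 : f (x * (f x)⁻¹) = f 1 := by
          have := star x (f x)⁻¹
          rw [mul_inv_cancel] at this
          exact this.symm
        calc f (x * (f x)⁻¹ * y) = f (f (x * (f x)⁻¹) * y) := (star _ _).symm
          _ = f (f 1 * y) := by rw [k1]
          _ = f (1 * y) := star _ _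
          _ = f y := by rw [one_mul]
      · have k2 : f ((f y)⁻¹ * y) = f 1 := by
          have := dstar (f y)⁻¹ y
          rw [inv_mul_cancel] at this
          exact this.symm
        calc f (x * ((f y)⁻¹ * y)) = f (x * f ((f y)⁻¹ * y)) := (dstar _ _).symm
          _ = f (x * f 1) := by rw [k2]
          _ = f (x * 1) := dstar _ _
          _ = f x := by rw [mul_one]
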